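/- Let G be a connected graph of bounded degree and p > 1. If h ∈ BD_p(G) is p-harmonic on all of V and f lies in the D_p-closure of the finitely supported functions (intersected with the bounded functions), then ⟨Δ_p h, f⟩ = 0. -/

import Mathlib

open scoped ENNReal Classical

variable {V : Type*}

/-- A graph has degree bounded by `k`. -/
def BoundedDegree (G : SimpleGraph V) (k : ℕ) : Prop :=
  ∀ x : V, (G.neighborSet x).Finite ∧ (G.neighborSet x).ncard ≤ k

/-- A bounded real-valued function on the vertex set. -/
def BddFun (f : V → ℝ) : Prop := ∃ M : ℝ, ∀ x, |f x| ≤ M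

/-- The `p`-Dirichlet sum `I_p(f,V) = Σ_x Σ_{y ∈ N_x} |f(y)-f(x)|^p`. -/
noncomputable def Ip (G : SimpleGraph V) (p : ℝ) (f : V → ℝ) : ℝ≥0∞ :=
  ∑' x : V, ∑' y : V, if G.Adj x y then ENNReal.ofReal (|f y - f x| ^ p) else 0

/-- Membership in `BD_p(G)`: bounded with finite `p`-Dirichlet sum. -/
def MemBDp (G : SimpleGraph V) (p : ℝ) (f : V → ℝ) : Prop :=
  BddFun f ∧ Ip G p f ≠ ⊤

/-- The `BD_p` norm `(I_p(f,V))^{1/p} + sup_V |f|`. -/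
noncomputable def BDpNorm (G : SimpleGraph V) (p : ℝ) (f : V → ℝ) : ℝ :=
  (Ip G p f).toReal ^ (1/p) + ⨆ x, |f x|

/-- The `p`-th power of the `D_p`-distance from `f` to `0` (with base vertex `o`):
`I_p(f,V) + |f(o)|^p`, valued in `ℝ≥0∞`. -/
noncomputable def DpDist (G : SimpleGraph V) (p : ℝ) (o : V) (f : V → ℝ) : ℝ≥0∞ :=
  Ip G p f + ENNReal.ofReal (|f o| ^ p)

/-- `f` is bounded and lies in the `D_p`-closure of the finitely supported functions:
the space `B(\overline{ℝG})_{D_p}`. -/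
def BRClos (G : SimpleGraph V) (p : ℝ) (o : V) (f : V → ℝ) : Prop :=
  BddFun f ∧ ∀ ε : ℝ, 0 < ε → ∃ u : V → ℝ,
    (Function.support u).Finite ∧ DpDist G p o (fun x => f x - u x) < ENNReal.ofReal ε

/-- The `p`-Laplacian `Δ_p h (x) = Σ_{y ∈ N_x} |h(y)-h(x)|^{p-2}(h(y)-h(x))`. -/
noncomputable def pLap (G : SimpleGraph V) (p : ℝ) (h : V → ℝ) (x : V) : ℝ :=
  ∑' y : V, if G.Adj x y then |h y - h x| ^ (p-2) * (h y - h x) else 0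

/-- `h` is `p`-harmonic on all of `V`. -/
def PHarmonic (G : SimpleGraph V) (p : ℝ) (h : V → ℝ) : Prop :=
  ∀ x, pLap G p h x = 0

/-- The pairing `⟨Δ_p h, f⟩ = Σ_x Σ_{y ∈ N_x} |h(y)-h(x)|^{p-2}(h(y)-h(x))(f(y)-f(x))`. -/
noncomputable def pPair (G : SimpleGraph V) (p : ℝ) (h f : V → ℝ) : ℝ :=
  ∑' x : V, ∑' y : V,
    if G.Adj x y then |h y - h x| ^ (p-2) * (h y - h x) * (f y - f x) else 0

/-! ### Auxiliary machinery -/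

/-- The coefficient `a(x,y) = |h(y)-h(x)|^{p-2}(h(y)-h(x))` on edges, `0` elsewhere. -/
noncomputable def Aa (G : SimpleGraph V) (p : ℝ) (h : V → ℝ) (x y : V) : ℝ :=
  if G.Adj x y then |h y - h x| ^ (p-2) * (h y - h x) else 0

lemma Aa_antisymm (G : SimpleGraph V) (p : ℝ) (h : V → ℝ) (x y : V) :
    Aa G p h y x = - Aa G p h x y := by
  unfold Aa
  by_cases hxy : G.Adj x y
  · rw [if_pos hxy, if_pos hxy.symm, abs_sub_comm]
    ring
  · rw [if_neg hxy, if_neg fun hc => hxy hc.symm, neg_zero]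

lemma pLap_eq_tsum_Aa (G : SimpleGraph V) (p : ℝ) (h : V → ℝ) (x : V) :
    pLap G p h x = ∑' y, Aa G p h x y := rfl

lemma abs_Aa (G : SimpleGraph V) {p : ℝ} (hp : 1 < p) (h : V → ℝ) (x y : V) :
    |Aa G p h x y| = if G.Adj x y then |h y - h x| ^ (p-1) else 0 := by
  unfold Aa
  by_cases hxy : G.Adj x y
  · rw [if_pos hxy, if_pos hxy]
    rcases eq_or_ne (h y - h x) 0 with hd | hd
    · rw [hd]
      simp [Real.zero_rpow (by intro hc; linarith [sub_eq_zero.mp hc] : p - 1 ≠ 0)]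
    · rw [abs_mul, abs_of_nonneg (Real.rpow_nonneg (abs_nonneg _) _)]
      nth_rewrite 2 [← Real.rpow_one |h y - h x|]
      rw [← Real.rpow_add (abs_pos.2 hd)]
      congr 1
      ring
  · rw [if_neg hxy, if_neg hxy, abs_zero]

lemma Aa_eq_zero_of_not_adj (G : SimpleGraph V) (p : ℝ) (h : V → ℝ) {x y : V}
    (hxy : ¬ G.Adj x y) : Aa G p h x y = 0 := if_neg hxy

/-- A function supported in the (finite) neighbor set of `x` is summable. -/
lemma summable_of_adj_support (G : SimpleGraph V) {x : V} (hfin : (G.neighborSet x).Finite)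
    (F : V → ℝ) (hF : ∀ y, ¬ G.Adj x y → F y = 0) : Summable F := by
  refine summable_of_ne_finset_zero (s := hfin.toFinset) fun y hy => hF y ?_
  simpa [Set.Finite.mem_toFinset] using hy

lemma summable_of_support_subset {α : Type*} {F : α → ℝ} {s : Set α} (hs : s.Finite)
    (hsub : ∀ a, F a ≠ 0 → a ∈ s) : Summable F :=
  summable_of_finite_support (hs.subset fun a ha => hsub a ha)

lemma Ip_eq_tsum_prod (G : SimpleGraph V) (p : ℝ) (f : V → ℝ) :
    Ip G p f
      = ∑' z : V × V, ENNReal.ofReal (if G.Adj z.1 z.2 then |f z.2 - f z.1| ^ p else 0) := by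
  rw [Ip, ENNReal.tsum_prod']
  refine tsum_congr fun x => tsum_congr fun y => ?_
  by_cases hz : G.Adj x y <;> simp [hz]

lemma energy_term_nonneg (G : SimpleGraph V) (p : ℝ) (f : V → ℝ) (z : V × V) :
    0 ≤ if G.Adj z.1 z.2 then |f z.2 - f z.1| ^ p else 0 := by
  split
  · exact Real.rpow_nonneg (abs_nonneg _) _
  · exact le_refl 0

lemma summable_energy (G : SimpleGraph V) (p : ℝ) (f : V → ℝ) (hf : Ip G p f ≠ ⊤) :
    Summable (fun z : V × V => if G.Adj z.1 z.2 then |f z.2 - f z.1| ^ p else 0) := by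
  have h1 : Summable (fun z : V × V =>
      (ENNReal.ofReal (if G.Adj z.1 z.2 then |f z.2 - f z.1| ^ p else 0)).toReal) :=
    ENNReal.summable_toReal (by rw [← Ip_eq_tsum_prod]; exact hf)
  exact h1.congr fun z => ENNReal.toReal_ofReal (energy_term_nonneg G p f z)

lemma toReal_Ip (G : SimpleGraph V) (p : ℝ) (f : V → ℝ) :
    (Ip G p f).toReal = ∑' z : V × V, (if G.Adj z.1 z.2 then |f z.2 - f z.1| ^ p else 0) := by
  rw [Ip_eq_tsum_prod, ENNReal.tsum_toReal_eq fun z => ENNReal.ofReal_ne_top]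
  exact tsum_congr fun z => ENNReal.toReal_ofReal (energy_term_nonneg G p f z)

lemma finite_pairs (G : SimpleGraph V) (hk : ∀ x, (G.neighborSet x).Finite)
    (u : V → ℝ) (hu : (Function.support u).Finite) :
    {z : V × V | G.Adj z.1 z.2 ∧ (u z.1 ≠ 0 ∨ u z.2 ≠ 0)}.Finite := by
  have hsub : {z : V × V | G.Adj z.1 z.2 ∧ (u z.1 ≠ 0 ∨ u z.2 ≠ 0)}
      ⊆ (⋃ x ∈ Function.support u, ({x} : Set V) ×ˢ G.neighborSet x) ∪
        (⋃ y ∈ Function.support u, G.neighborSet y ×ˢ ({y} : Set V)) := by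
    rintro ⟨x, y⟩ ⟨hadj, hne⟩
    rcases hne with hx | hy
    · exact Or.inl (Set.mem_biUnion hx (by simp [SimpleGraph.mem_neighborSet, hadj]))
    · exact Or.inr (Set.mem_biUnion hy (by simp [SimpleGraph.mem_neighborSet, hadj.symm]))
  exact ((hu.biUnion fun x _ => (Set.finite_singleton x).prod (hk x)).union
      (hu.biUnion fun y _ => (hk y).prod (Set.finite_singleton y))).subset hsub

lemma pair_term_eq (G : SimpleGraph V) (p : ℝ) (h w : V → ℝ) (x y : V) :
    (if G.Adj x y then |h y - h x| ^ (p-2) * (h y - h x) * (w y - w x) else 0)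
      = Aa G p h x y * (w y - w x) := by
  unfold Aa
  split
  · rfl
  · rw [zero_mul]

lemma pPair_eq (G : SimpleGraph V) (p : ℝ) (h w : V → ℝ) :
    pPair G p h w = ∑' x, ∑' y, Aa G p h x y * (w y - w x) :=
  tsum_congr fun x => tsum_congr fun y => pair_term_eq G p h w x y

theorem stmt5 [Countable V] [Infinite V] (G : SimpleGraph V) (k : ℕ)
    (hG : G.Connected) (hk : BoundedDegree G k) (p : ℝ) (hp : 1 < p) (o : V)
    (h : V → ℝ) (hh : MemBDp G p h) (hharm : PHarmonic G p h)
    (f : V → ℝ) (hf : BRClos G p o f) :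
    pPair G p h f = 0 := by
  obtain ⟨hbdd, hIh⟩ := hh
  have hkfin : ∀ x, (G.neighborSet x).Finite := fun x => (hk x).1
  set q : ℝ := Real.conjExponent p with hqdef
  have hpq : p.HolderConjugate q := Real.HolderConjugate.conjExponent hp
  -- the energy of h, as a real number
  set E : ℝ := (Ip G p h).toReal with hEdef
  have hHsum : Summable (fun z : V × V => if G.Adj z.1 z.2 then |h z.2 - h z.1| ^ p else 0) :=
    summable_energy G p h hIh
  have hEnn : 0 ≤ E ^ (1/q) := Real.rpow_nonneg ENNReal.toReal_nonneg _
  -- main estimate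
  have key : ∀ δ : ℝ, 0 < δ → |pPair G p h f| ≤ δ := by
    intro δ hδ
    set r : ℝ := δ / (E ^ (1/q) + 1) with hrdef
    have hrpos : 0 < r := div_pos hδ (by linarith)
    obtain ⟨u, husupp, hud⟩ := hf.2 (r ^ p) (Real.rpow_pos_of_pos hrpos p)
    set g : V → ℝ := fun x => f x - u x with hgdef
    have hIg : Ip G p g < ENNReal.ofReal (r ^ p) := lt_of_le_of_lt le_self_add hud
    have hIgne : Ip G p g ≠ ⊤ := ne_top_of_lt hIg
    have hGsum : Summable (fun z : V × V => if G.Adj z.1 z.2 then |g z.2 - g z.1| ^ p else 0) :=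
      summable_energy G p g hIgne
    have hGlt : (Ip G p g).toReal < r ^ p := ENNReal.toReal_lt_of_lt_ofReal hIg
    -- the finite set of relevant pairs for u
    have hSfin := finite_pairs G hkfin u husupp
    -- summability of the various product-indexed families
    have hTu_sum : Summable (fun z : V × V => Aa G p h z.1 z.2 * (u z.2 - u z.1)) := by
      refine summable_of_support_subset hSfin fun z hz => ?_
      constructor
      · by_contra hadj
        exact hz (by rw [Aa_eq_zero_of_not_adj G p h hadj, zero_mul])
      · by_contra hne
        push_neg at hne
        exact hz (by rw [hne.1, hne.2, sub_zero, mul_zero])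
    have hU1_sum : Summable (fun z : V × V => Aa G p h z.1 z.2 * u z.2) := by
      refine summable_of_support_subset hSfin fun z hz => ?_
      constructor
      · by_contra hadj
        exact hz (by rw [Aa_eq_zero_of_not_adj G p h hadj, zero_mul])
      · exact Or.inr fun hzero => hz (by rw [hzero, mul_zero])
    have hU2_sum : Summable (fun z : V × V => Aa G p h z.2 z.1 * u z.1) := by
      refine summable_of_support_subset hSfin fun z hz => ?_
      constructor
      · by_contra hadj
        exact hz (by rw [Aa_eq_zero_of_not_adj G p h fun hc => hadj hc.symm, zero_mul])
      · exact Or.inl fun hzero => hz (by rw [hzero, mul_zero])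
    -- inner summability helpers
    have hinner : ∀ (x : V) (c : V → ℝ), Summable (fun y => Aa G p h x y * c y) := by
      intro x c
      exact summable_of_adj_support G (hkfin x) _
        (fun y hy => by rw [Aa_eq_zero_of_not_adj G p h hy, zero_mul])
    have hinner' : ∀ (x : V) (c : V → ℝ), Summable (fun y => Aa G p h y x * c y) := by
      intro x c
      exact summable_of_adj_support G (hkfin x) _
        (fun y hy => by
          rw [Aa_eq_zero_of_not_adj G p h fun hc => hy hc.symm, zero_mul])
    -- Step 1 : the pairing against u vanishes
    have hsum_Ax : ∀ x : V, ∑' y, Aa G p h x y = 0 := fun x => by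
      rw [← pLap_eq_tsum_Aa]; exact hharm x
    have hsum_Ax' : ∀ x : V, ∑' y, Aa G p h y x = 0 := by
      intro x
      have : (fun y => Aa G p h y x) = fun y => -(Aa G p h x y) := by
        funext y; exact Aa_antisymm G p h x y
      rw [this, tsum_neg, hsum_Ax x, neg_zero]
    have hPu : pPair G p h u = 0 := by
      rw [pPair_eq]
      have hinner_split : ∀ x : V,
          (∑' y, Aa G p h x y * (u y - u x)) = ∑' y, Aa G p h x y * u y := by
        intro x
        have h2 : Summable (fun y => Aa G p h x y * u x) := hinner x (fun _ => u x)
        have h1 : Summable (fun y => Aa G p h x y * u y) := hinner x u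
        have : (∑' y, Aa G p h x y * (u y - u x))
            = (∑' y, Aa G p h x y * u y) - ∑' y, Aa G p h x y * u x := by
          rw [← Summable.tsum_sub h1 h2]
          exact tsum_congr fun y => by ring
        rw [this, tsum_mul_right, hsum_Ax x, zero_mul, sub_zero]
      rw [tsum_congr hinner_split]
      have hswap : (∑' z : V × V, Aa G p h z.2 z.1 * u z.1)
          = ∑' z : V × V, Aa G p h z.1 z.2 * u z.2 := by
        simpa using Equiv.tsum_eq (Equiv.prodComm V V)
          (fun z : V × V => Aa G p h z.1 z.2 * u z.2)
      have hU1 : (∑' z : V × V, Aa G p h z.1 z.2 * u z.2) = 0 := by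
        rw [← hswap, Summable.tsum_prod' hU2_sum fun x => hinner' x (fun _ => u x)]
        have : ∀ x : V, (∑' y, Aa G p h y x * u x) = 0 := by
          intro x
          rw [tsum_mul_right, hsum_Ax' x, zero_mul]
        rw [tsum_congr this, tsum_zero]
      rw [← Summable.tsum_prod' hU1_sum fun x => hinner x u]
      exact hU1
    -- Step 2 : summability of the pairing terms against g, via Young's inequality
    set φ : V × V → ℝ := fun z => if G.Adj z.1 z.2 then |h z.2 - h z.1| ^ (p-1) else 0 with hφdef
    set ψ : V × V → ℝ := fun z => if G.Adj z.1 z.2 then |g z.2 - g z.1| else 0 with hψdef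
    have hφnn : ∀ z, 0 ≤ φ z := by
      intro z; simp only [hφdef]; split
      · exact Real.rpow_nonneg (abs_nonneg _) _
      · exact le_refl 0
    have hψnn : ∀ z, 0 ≤ ψ z := by
      intro z; simp only [hψdef]; split
      · exact abs_nonneg _
      · exact le_refl 0
    have hφq : ∀ z : V × V, φ z ^ q = if G.Adj z.1 z.2 then |h z.2 - h z.1| ^ p else 0 := by
      intro z; simp only [hφdef]; split
      · rw [← Real.rpow_mul (abs_nonneg _), hpq.sub_one_mul_conj]
      · exact Real.zero_rpow hpq.symm.ne_zero
    have hψp : ∀ z : V × V, ψ z ^ p = if G.Adj z.1 z.2 then |g z.2 - g z.1| ^ p else 0 := by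
      intro z; simp only [hψdef]; split
      · rfl
      · exact Real.zero_rpow hpq.ne_zero
    have hφq_sum : Summable (fun z => φ z ^ q) := by
      rw [show (fun z => φ z ^ q) = _ from funext hφq]; exact hHsum
    have hψp_sum : Summable (fun z => ψ z ^ p) := by
      rw [show (fun z => ψ z ^ p) = _ from funext hψp]; exact hGsum
    have habsTg : ∀ z : V × V, |Aa G p h z.1 z.2 * (g z.2 - g z.1)| = φ z * ψ z := by
      intro z
      rw [abs_mul, abs_Aa G hp h]
      simp only [hφdef, hψdef]
      by_cases hz : G.Adj z.1 z.2 <;> simp [hz]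
    have hTg_abs_sum : Summable (fun z : V × V => |Aa G p h z.1 z.2 * (g z.2 - g z.1)|) := by
      refine Summable.of_nonneg_of_le (fun z => abs_nonneg _)
        (fun z => ?_) ((hφq_sum.div_const q).add (hψp_sum.div_const p))
      rw [habsTg z]
      exact Real.young_inequality_of_nonneg (hφnn z) (hψnn z) hpq.symm
    have hTg_sum : Summable (fun z : V × V => Aa G p h z.1 z.2 * (g z.2 - g z.1)) :=
      hTg_abs_sum.of_abs
    -- Step 3 : decompose the pairing
    have hBu_sum : Summable (fun x => ∑' y, Aa G p h x y * (u y - u x)) := by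
      refine summable_of_support_subset
        (husupp.union (husupp.biUnion fun y _ => hkfin y)) fun x hx => ?_
      by_contra hxs
      rw [Set.mem_union] at hxs
      push_neg at hxs
      have hux : u x = 0 := by
        by_contra hc; exact hxs.1 hc
      refine hx ?_
      have : ∀ y, Aa G p h x y * (u y - u x) = 0 := by
        intro y
        by_cases hadj : G.Adj x y
        · have huy : u y = 0 := by
            by_contra hc
            exact hxs.2 (Set.mem_biUnion hc (by simpa [SimpleGraph.mem_neighborSet] using hadj.symm))
          rw [huy, hux, sub_zero, mul_zero]
        · rw [Aa_eq_zero_of_not_adj G p h hadj, zero_mul]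
      rw [tsum_congr this, tsum_zero]
    have hBg_sum : Summable (fun x => ∑' y, Aa G p h x y * (g y - g x)) := by
      have := hTg_sum.hasSum.prod_fiberwise
        (fun x => (hinner x (fun y => g y - g x)).hasSum)
      exact this.summable
    have hdecomp : pPair G p h f
        = pPair G p h u + ∑' z : V × V, Aa G p h z.1 z.2 * (g z.2 - g z.1) := by
      rw [pPair_eq, pPair_eq]
      have hinner_eq : ∀ x : V,
          (∑' y, Aa G p h x y * (f y - f x))
            = (∑' y, Aa G p h x y * (u y - u x)) + ∑' y, Aa G p h x y * (g y - g x) := by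
        intro x
        rw [← Summable.tsum_add (hinner x (fun y => u y - u x)) (hinner x (fun y => g y - g x))]
        refine tsum_congr fun y => ?_
        simp only [hgdef]
        ring
      rw [tsum_congr hinner_eq, Summable.tsum_add hBu_sum hBg_sum,
        Summable.tsum_prod' hTg_sum fun x => hinner x (fun y => g y - g x)]
    -- Step 4 : Hölder estimate
    have hHolder : (∑' z : V × V, φ z * ψ z)
        ≤ (∑' z, φ z ^ q) ^ (1/q) * (∑' z, ψ z ^ p) ^ (1/p) := by
      have := Real.inner_le_Lp_mul_Lq_tsum_of_nonneg hpq.symm hφnn hψnn hφq_sum hψp_sum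
      exact this
    have hφq_val : (∑' z, φ z ^ q) = E := by
      rw [show (fun z => φ z ^ q) = _ from funext hφq, hEdef, toReal_Ip]
    have hψp_val : (∑' z, ψ z ^ p) = (Ip G p g).toReal := by
      rw [show (fun z => ψ z ^ p) = _ from funext hψp, toReal_Ip]
    have habs : |∑' z : V × V, Aa G p h z.1 z.2 * (g z.2 - g z.1)|
        ≤ ∑' z : V × V, φ z * ψ z := by
      have h1 : |∑' z : V × V, Aa G p h z.1 z.2 * (g z.2 - g z.1)|
          ≤ ∑' z : V × V, |Aa G p h z.1 z.2 * (g z.2 - g z.1)| := by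
        simpa only [Real.norm_eq_abs] using
          norm_tsum_le_tsum_norm (f := fun z : V × V => Aa G p h z.1 z.2 * (g z.2 - g z.1))
            (by simpa only [Real.norm_eq_abs] using hTg_abs_sum)
      exact h1.trans_eq (tsum_congr habsTg)
    have hfinal : |pPair G p h f| ≤ E ^ (1/q) * ((Ip G p g).toReal) ^ (1/p) := by
      rw [hdecomp, hPu, zero_add]
      calc |∑' z : V × V, Aa G p h z.1 z.2 * (g z.2 - g z.1)|
          ≤ ∑' z : V × V, φ z * ψ z := habs
        _ ≤ (∑' z, φ z ^ q) ^ (1/q) * (∑' z, ψ z ^ p) ^ (1/p) := hHolder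
        _ = E ^ (1/q) * ((Ip G p g).toReal) ^ (1/p) := by rw [hφq_val, hψp_val]
    have hrp : ((Ip G p g).toReal) ^ (1/p) ≤ r := by
      have h1 : ((Ip G p g).toReal) ^ (1/p) ≤ (r ^ p) ^ (1/p) :=
        Real.rpow_le_rpow ENNReal.toReal_nonneg hGlt.le hpq.one_div_nonneg
      have h2 : (r ^ p) ^ (1/p) = r := by
        rw [← Real.rpow_mul hrpos.le, mul_one_div, div_self hpq.ne_zero, Real.rpow_one]
      rwa [h2] at h1
    calc |pPair G p h f| ≤ E ^ (1/q) * ((Ip G p g).toReal) ^ (1/p) := hfinal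
      _ ≤ E ^ (1/q) * r := mul_le_mul_of_nonneg_left hrp hEnn
      _ ≤ (E ^ (1/q) + 1) * r := mul_le_mul_of_nonneg_right (by linarith) hrpos.le
      _ = δ := by
          rw [hrdef, mul_div_cancel₀ _ (by linarith : E ^ (1/q) + 1 ≠ 0)]
  -- conclude
  by_contra hne
  have hpos : 0 < |pPair G p h f| := abs_pos.2 hne
  have := key (|pPair G p h f| / 2) (by linarith)
  linarith
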